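/- arXiv:2604.03958 — 9 statements merged into one kernel-verified Lean document; each statement's English description precedes it below -/
import Mathlib

section
/- Let G and H be real symmetric positive definite n×n matrices and write M = (G+H)⁻¹G. Then every eigenvalue of M (viewed as a complex matrix) is a real number lying in the open interval (0,1); in particular the spectral radius of M satisfies ρ(M) < 1. -/
open Matrix

-- key lemma: positive-real quadratic form of complexified PD matrix
lemma aux_quad {n : ℕ} {A : Matrix (Fin n) (Fin n) ℝ} (hA : A.PosDef)
    (x : Fin n → ℂ) (hx : x ≠ 0) :
    ∃ c : ℝ, 0 < c ∧ star x ⬝ᵥ ((A.map Complex.ofReal) *ᵥ x) = (c : ℂ) := by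
  classical
  set u : Fin n → ℝ := fun i => (x i).re with hu
  set v : Fin n → ℝ := fun i => (x i).im with hv
  have hQ : star x ⬝ᵥ ((A.map Complex.ofReal) *ᵥ x)
      = ∑ i, ∑ j, ((A i j : ℂ) * ((starRingEnd ℂ) (x i) * x j)) := by
    simp only [dotProduct, mulVec, Pi.star_apply, map_apply, Finset.mul_sum]
    refine Finset.sum_congr rfl fun i _ => Finset.sum_congr rfl fun j _ => ?_
    simp [Complex.star_def]
    ring
  have hre : (star x ⬝ᵥ ((A.map Complex.ofReal) *ᵥ x)).re
      = u ⬝ᵥ A *ᵥ u + v ⬝ᵥ A *ᵥ v := by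
    rw [hQ]
    rw [Complex.re_sum]
    simp only [Complex.re_sum]
    have : ∀ i j : Fin n, ((A i j : ℂ) * ((starRingEnd ℂ) (x i) * x j)).re
        = A i j * (u i * u j) + A i j * (v i * v j) := by
      intro i j
      simp [Complex.mul_re, Complex.mul_im, hu, hv]
      ring
    simp only [this, Finset.sum_add_distrib]
    simp [dotProduct, mulVec, Finset.mul_sum, mul_comm, mul_left_comm]
  have him : (star x ⬝ᵥ ((A.map Complex.ofReal) *ᵥ x)).im = 0 := by
    rw [hQ, Complex.im_sum]
    simp only [Complex.im_sum]
    have hterm : ∀ i j : Fin n, ((A i j : ℂ) * ((starRingEnd ℂ) (x i) * x j)).im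
        = A i j * (u i * v j) - A i j * (v i * u j) := by
      intro i j
      simp [Complex.mul_re, Complex.mul_im, hu, hv]
      ring
    simp only [hterm]
    have hsym : ∀ i j : Fin n, A j i = A i j := fun i j => by
      have := congrFun (congrFun hA.1 i) j
      simpa [conjTranspose_apply] using this
    have h1 : ∑ i, ∑ j, (A i j * (u i * v j) - A i j * (v i * u j))
        = -∑ i, ∑ j, (A i j * (u i * v j) - A i j * (v i * u j)) := by
      calc ∑ i, ∑ j, (A i j * (u i * v j) - A i j * (v i * u j))
          = ∑ j, ∑ i, (A i j * (u i * v j) - A i j * (v i * u j)) := Finset.sum_comm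
        _ = ∑ j, ∑ i, -(A j i * (u j * v i) - A j i * (v j * u i)) := by
            refine Finset.sum_congr rfl fun j _ => Finset.sum_congr rfl fun i _ => ?_
            rw [hsym i j]; ring
        _ = -∑ j, ∑ i, (A j i * (u j * v i) - A j i * (v j * u i)) := by
            simp [Finset.sum_neg_distrib]
        _ = -∑ i, ∑ j, (A i j * (u i * v j) - A i j * (v i * u j)) := rfl
    linarith [h1]
  refine ⟨u ⬝ᵥ A *ᵥ u + v ⬝ᵥ A *ᵥ v, ?_, ?_⟩
  · -- positivity
    have hx' : u ≠ 0 ∨ v ≠ 0 := by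
      by_contra h
      push_neg at h
      apply hx
      funext i
      have h1 := congrFun h.1 i
      have h2 := congrFun h.2 i
      simp [hu, hv] at h1 h2
      exact Complex.ext (by simpa using h1) (by simpa using h2)
    have hpsd := hA.posSemidef
    rcases hx' with h | h
    · have := hA.dotProduct_mulVec_pos h
      have h2 := hpsd.dotProduct_mulVec_nonneg v
      simp only [star_trivial] at this h2
      linarith
    · have := hA.dotProduct_mulVec_pos h
      have h2 := hpsd.dotProduct_mulVec_nonneg u
      simp only [star_trivial] at this h2
      linarith
  · exact Complex.ext (by rw [hre]; simp) (by rw [him]; simp)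

/-- Every eigenvalue of `M = (G+H)⁻¹G` (as a complex matrix) is a real number in `(0,1)`,
and the spectral radius of `M` is less than `1`. -/
theorem stmt0 {n : ℕ} (G H : Matrix (Fin n) (Fin n) ℝ)
    (hG : G.PosDef) (hH : H.PosDef) :
    (∀ μ ∈ spectrum ℂ (((G + H)⁻¹ * G).map (Complex.ofReal)),
      ∃ t : ℝ, μ = (t : ℂ) ∧ 0 < t ∧ t < 1) ∧
    spectralRadius ℂ (((G + H)⁻¹ * G).map (Complex.ofReal)) < 1 := by
  classical
  have hA : (G + H).PosDef := hG.add hH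
  have hdet : IsUnit (G + H).det := hA.det_pos.ne'.isUnit
  have hAM : (G + H) * ((G + H)⁻¹ * G) = G := by
    rw [← mul_assoc, mul_nonsing_inv _ hdet, one_mul]
  set Mc := (((G + H)⁻¹ * G).map (Complex.ofReal)) with hMc
  have hAMc : ((G + H).map Complex.ofReal) * Mc = G.map Complex.ofReal := by
    have hcoe : ⇑Complex.ofRealHom = Complex.ofReal := rfl
    have hmm : ((G + H) * ((G + H)⁻¹ * G)).map Complex.ofReal
        = (G + H).map Complex.ofReal * ((G + H)⁻¹ * G).map Complex.ofReal := by
      rw [← hcoe]; exact Matrix.map_mul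
    rw [hMc, ← hmm, hAM]
  have key : ∀ μ ∈ spectrum ℂ Mc, ∃ t : ℝ, μ = (t : ℂ) ∧ 0 < t ∧ t < 1 := by
    intro μ hμ
    rw [spectrum.mem_iff] at hμ
    have hdet0 : (algebraMap ℂ (Matrix (Fin n) (Fin n) ℂ) μ - Mc).det = 0 := by
      by_contra h
      exact hμ ((Matrix.isUnit_iff_isUnit_det _).mpr (isUnit_iff_ne_zero.mpr h))
    obtain ⟨x, hx0, hxe⟩ := (Matrix.exists_mulVec_eq_zero_iff).mpr hdet0
    have hMx : Mc *ᵥ x = μ • x := by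
      rw [sub_mulVec, sub_eq_zero] at hxe
      rw [← hxe]
      funext i
      simp [Matrix.algebraMap_eq_diagonal, Matrix.mulVec_diagonal, Pi.algebraMap_apply]
    have h2 : (G.map Complex.ofReal) *ᵥ x = μ • (((G + H).map Complex.ofReal) *ᵥ x) := by
      rw [← hAMc, ← mulVec_mulVec, hMx, mulVec_smul]
    obtain ⟨cG, hcG, hGq⟩ := aux_quad hG x hx0
    obtain ⟨cA, hcA, hAq⟩ := aux_quad hA x hx0
    obtain ⟨cH, hcH, hHq⟩ := aux_quad hH x hx0
    have hsum : cA = cG + cH := by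
      have : ((G + H).map Complex.ofReal) = G.map Complex.ofReal + H.map Complex.ofReal := by
        ext i j; simp
      have h3 : (cA : ℂ) = (cG : ℂ) + (cH : ℂ) := by
        rw [← hGq, ← hHq, ← hAq, this, add_mulVec, dotProduct_add]
      exact_mod_cast h3
    have heq : (cG : ℂ) = μ * cA := by
      rw [← hGq, ← hAq, h2, dotProduct_smul, smul_eq_mul]
    refine ⟨cG / cA, ?_, div_pos hcG hcA, (div_lt_one hcA).mpr (by linarith)⟩
    have hcA' : (cA : ℂ) ≠ 0 := by exact_mod_cast hcA.ne'
    rw [Complex.ofReal_div, eq_div_iff hcA']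
    exact heq.symm
  refine ⟨key, ?_⟩
  by_cases hne : (spectrum ℂ Mc).Nonempty
  · have hfin : ((fun μ : ℂ => (‖μ‖₊ : ENNReal)) '' spectrum ℂ Mc).Finite :=
      (Matrix.finite_spectrum Mc).image _
    have hmem := (hne.image (fun μ : ℂ => (‖μ‖₊ : ENNReal))).csSup_mem hfin
    have hrad : spectralRadius ℂ Mc
        = sSup ((fun μ : ℂ => (‖μ‖₊ : ENNReal)) '' spectrum ℂ Mc) := by
      rw [spectralRadius, sSup_image]
    rw [hrad]
    obtain ⟨μ, hμ, hval⟩ := hmem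
    rw [← hval]
    obtain ⟨t, ht, ht0, ht1⟩ := key μ hμ
    have h5 : ‖μ‖ < 1 := by
      rw [ht, Complex.norm_real, Real.norm_eq_abs, abs_of_pos ht0]
      exact ht1
    have h6 : ‖μ‖₊ < 1 := by exact_mod_cast h5
    show (‖μ‖₊ : ENNReal) < 1
    exact_mod_cast h6
  · rw [Set.not_nonempty_iff_eq_empty] at hne
    simp [spectralRadius, hne]
end

section
/- Let G and H be real symmetric positive definite n×n matrices and let r be a natural number. Then the matrix φ = (I − ((G+H)⁻¹G)^{r+1}) H⁻¹ is symmetric, i.e. φᵀ = φ. -/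
open Matrix

/-- The matrix `φ = (I − ((G+H)⁻¹G)^{r+1}) H⁻¹` is symmetric. -/
theorem stmt1 {n : ℕ} (G H : Matrix (Fin n) (Fin n) ℝ)
    (hG : G.PosDef) (hH : H.PosDef) (r : ℕ) :
    ((1 - ((G + H)⁻¹ * G) ^ (r + 1)) * H⁻¹)ᵀ
      = (1 - ((G + H)⁻¹ * G) ^ (r + 1)) * H⁻¹ := by
  have hS : (G + H).PosDef := hG.add hH
  have hSdet : IsUnit (G + H).det := isUnit_iff_ne_zero.2 (ne_of_gt hS.det_pos)
  have hHdet : IsUnit H.det := isUnit_iff_ne_zero.2 (ne_of_gt hH.det_pos)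
  have hGt : Gᵀ = G := hG.isHermitian.eq
  have hHt : Hᵀ = H := hH.isHermitian.eq
  have hSt : (G + H)ᵀ = G + H := hS.isHermitian.eq
  have hHit : (H⁻¹)ᵀ = H⁻¹ := by rw [transpose_nonsing_inv, hHt]
  have hSi : (G + H)⁻¹ * (G + H) = 1 := nonsing_inv_mul _ hSdet
  have hSi' : (G + H) * (G + H)⁻¹ = 1 := mul_nonsing_inv _ hSdet
  have hHi : H⁻¹ * H = 1 := nonsing_inv_mul _ hHdet
  have hHi' : H * H⁻¹ = 1 := mul_nonsing_inv _ hHdet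
  -- key commutation
  have key : (G + H) * (H⁻¹ * G) = (G * H⁻¹) * (G + H) := by
    rw [add_mul, mul_add, ← mul_assoc H, hHi', one_mul, mul_assoc G H⁻¹ H, hHi, mul_one, mul_assoc]
  have comm : H⁻¹ * (G * (G + H)⁻¹) = ((G + H)⁻¹ * G) * H⁻¹ := by
    have := congrArg (fun M => (G + H)⁻¹ * M * (G + H)⁻¹) key
    simp only [← mul_assoc, hSi] at this
    rw [one_mul] at this
    calc H⁻¹ * (G * (G + H)⁻¹) = H⁻¹ * G * (G + H)⁻¹ := by rw [mul_assoc]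
      _ = (G + H)⁻¹ * (G * H⁻¹) := by
          rw [this]; simp only [mul_assoc, hSi', mul_one]
      _ = ((G + H)⁻¹ * G) * H⁻¹ := by rw [mul_assoc]
  have comm_pow : ∀ k : ℕ, H⁻¹ * (G * (G + H)⁻¹) ^ k = ((G + H)⁻¹ * G) ^ k * H⁻¹ := by
    intro k
    induction k with
    | zero => simp
    | succ k ih =>
      rw [pow_succ', ← mul_assoc, comm, mul_assoc, ih, pow_succ', ← mul_assoc]
  have htA : (((G + H)⁻¹ * G) ^ (r + 1))ᵀ = (G * (G + H)⁻¹) ^ (r + 1) := by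
    rw [transpose_pow, transpose_mul, hGt, transpose_nonsing_inv, hSt]
  rw [transpose_mul, hHit, transpose_sub, transpose_one, htA, mul_sub, sub_mul,
    mul_one, one_mul, comm_pow]
end

section
/- Let G and H be real symmetric positive definite n×n matrices and let r be a natural number. Then ((I + G⁻¹H)⁻¹)^{r+1} H⁻¹ = H⁻¹ (G(G+H)⁻¹)^{r+1}. -/
open Matrix

/-- `((I + G⁻¹H)⁻¹)^{r+1} H⁻¹ = H⁻¹ (G(G+H)⁻¹)^{r+1}`. -/
theorem stmt3 {n : ℕ} (G H : Matrix (Fin n) (Fin n) ℝ)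
    (hG : G.PosDef) (hH : H.PosDef) (r : ℕ) :
    ((1 + G⁻¹ * H)⁻¹) ^ (r + 1) * H⁻¹ = H⁻¹ * (G * (G + H)⁻¹) ^ (r + 1) := by
  have hGH : (G + H).PosDef := by
    refine ⟨hG.1.add hH.1, fun x hx => ?_⟩
    have := add_pos (hG.2 hx) (hH.2 hx)
    simpa [add_mulVec, dotProduct_add, map_add, mul_add, add_mul, Finsupp.sum_add] using this
  have hGd : IsUnit G.det := (isUnit_iff_isUnit_det _).1 hG.isUnit
  have hHd : IsUnit H.det := (isUnit_iff_isUnit_det _).1 hH.isUnit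
  have hSd : IsUnit (G + H).det := (isUnit_iff_isUnit_det _).1 hGH.isUnit
  have h1 : (1 : Matrix (Fin n) (Fin n) ℝ) + G⁻¹ * H = G⁻¹ * (G + H) := by
    rw [mul_add, Matrix.nonsing_inv_mul G hGd]
  have h2 : (1 + G⁻¹ * H)⁻¹ = (G + H)⁻¹ * G := by
    rw [h1, Matrix.mul_inv_rev, Matrix.nonsing_inv_nonsing_inv G hGd]
  -- key commutation: (G+H)⁻¹ * G * H⁻¹ = H⁻¹ * (G * (G+H)⁻¹)
  have e : G * H⁻¹ * (G + H) = (G + H) * (H⁻¹ * G) := by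
    rw [mul_add, add_mul, mul_assoc G H⁻¹ H, Matrix.nonsing_inv_mul H hHd, mul_one,
      ← mul_assoc H H⁻¹ G, Matrix.mul_nonsing_inv H hHd, one_mul, mul_assoc]
  have key : (G + H)⁻¹ * (G * H⁻¹) = H⁻¹ * (G * (G + H)⁻¹) := by
    have := congrArg (fun M => (G + H)⁻¹ * M * (G + H)⁻¹) e
    simp only [mul_assoc] at this
    rwa [Matrix.mul_nonsing_inv _ hSd, mul_one,
      Matrix.nonsing_inv_mul_cancel_left _ _ hSd] at this
  rw [h2]
  induction r with
  | zero => simpa [mul_assoc] using key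
  | succ k ih =>
    rw [pow_succ', mul_assoc, ih, ← mul_assoc, mul_assoc ((G + H)⁻¹) G H⁻¹, key,
      mul_assoc, ← pow_succ']
end

section
/- Let G and H be real symmetric positive definite n×n matrices, write M = (G+H)⁻¹G, and let g ∈ ℝⁿ. Define the sequence of vectors d⁰ = (G+H)⁻¹g and dˡ = (G+H)⁻¹(g + G dˡ⁻¹) for l ≥ 1. Then for every natural number r, dʳ = (I − M^{r+1}) H⁻¹ g. -/
open Matrix

/-- The inner loop of the OCP iteration: `d⁰ = (G+H)⁻¹g`,
`dˡ = (G+H)⁻¹(g + G dˡ⁻¹)`, satisfies `dʳ = (I − M^{r+1}) H⁻¹ g` with `M = (G+H)⁻¹G`. -/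
theorem stmt5 {n : ℕ} (G H : Matrix (Fin n) (Fin n) ℝ)
    (hG : G.PosDef) (hH : H.PosDef) (g : Fin n → ℝ)
    (d : ℕ → Fin n → ℝ)
    (hd0 : d 0 = (G + H)⁻¹ *ᵥ g)
    (hds : ∀ l : ℕ, d (l + 1) = (G + H)⁻¹ *ᵥ (g + G *ᵥ d l)) :
    ∀ r : ℕ, d r = ((1 - ((G + H)⁻¹ * G) ^ (r + 1)) * H⁻¹) *ᵥ g := by
  have hGH : (G + H).PosDef := hG.add hH
  have hdetGH : IsUnit (G + H).det := hGH.det_pos.ne'.isUnit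
  have hdetH : IsUnit H.det := hH.det_pos.ne'.isUnit
  set M := (G + H)⁻¹ * G with hM
  have h1 : 1 - M = (G + H)⁻¹ * H := by
    rw [hM, ← Matrix.nonsing_inv_mul _ hdetGH, ← Matrix.mul_sub, add_sub_cancel_left]
  have key : (G + H)⁻¹ = (1 - M) * H⁻¹ := by
    rw [h1, Matrix.mul_assoc, Matrix.mul_nonsing_inv _ hdetH, Matrix.mul_one]
  intro r
  induction r with
  | zero => rw [hd0, key, pow_one]
  | succ l ih =>
      rw [hds, ih, Matrix.mulVec_add, Matrix.mulVec_mulVec, Matrix.mulVec_mulVec,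
        ← Matrix.add_mulVec]
      rw [← hM, key, ← Matrix.mul_assoc, ← Matrix.add_mul]
      rw [Matrix.mul_sub, Matrix.mul_one, ← pow_succ']
      abel
end

section
/- Let G and H be real symmetric positive definite n×n matrices and write M = (G+H)⁻¹G. There exists a constant c > 0 such that for every natural number r and every vector v ∈ ℝⁿ, ‖Mʳ v‖ ≤ c · ρ(M)ʳ · ‖v‖, where ‖·‖ is the Euclidean norm and ρ(M) is the spectral radius of M. -/
open Matrix

/-- The Euclidean norm on `ℝⁿ`. -/
noncomputable def eucNorm {n : ℕ} (v : Fin n → ℝ) : ℝ := Real.sqrt (∑ i, v i ^ 2)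

/-- Complexification of a real symmetric matrix is Hermitian. -/
lemma mapHerm {n : ℕ} (P : Matrix (Fin n) (Fin n) ℝ) (hP : Pᵀ = P) :
    (P.map Complex.ofReal)ᴴ = P.map Complex.ofReal := by
  ext i j
  have h := congrFun (congrFun hP i) j
  simp only [transpose_apply] at h
  simp [conjTranspose_apply, map_apply, Complex.conj_ofReal, h]

/-- mulVec commutes with complexification. -/
lemma mapMulVec {n : ℕ} (P : Matrix (Fin n) (Fin n) ℝ) (w : Fin n → ℝ) :
    (fun i => ((P *ᵥ w) i : ℂ)) = (P.map Complex.ofReal) *ᵥ (fun j => (w j : ℂ)) := by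
  funext i
  simp only [Matrix.mulVec, dotProduct, Matrix.map_apply]
  push_cast
  rfl

lemma mapMulMat {n : ℕ} (P Q : Matrix (Fin n) (Fin n) ℝ) :
    (P * Q).map Complex.ofReal = P.map Complex.ofReal * Q.map Complex.ofReal := by
  ext i j
  simp only [Matrix.map_apply, Matrix.mul_apply]
  push_cast
  rfl

lemma eucNorm_eq {n : ℕ} (w : Fin n → ℝ) :
    eucNorm w = ‖(WithLp.equiv 2 (Fin n → ℂ)).symm (fun i => (w i : ℂ))‖ := by
  unfold eucNorm
  rw [EuclideanSpace.norm_eq]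
  congr 1
  refine Finset.sum_congr rfl fun i _ => ?_
  rw [WithLp.equiv_symm_apply, PiLp.toLp_apply, Complex.norm_real, Real.norm_eq_abs, sq_abs]

set_option maxHeartbeats 1600000

/-- There is `c > 0` with `‖Mʳ v‖ ≤ c ρ(M)ʳ ‖v‖` for all `r` and `v`, where
`M = (G+H)⁻¹G` and `ρ` is the spectral radius. -/
theorem stmt7 {n : ℕ} (G H : Matrix (Fin n) (Fin n) ℝ)
    (hG : G.PosDef) (hH : H.PosDef) :
    ∃ c : ℝ, 0 < c ∧ ∀ (r : ℕ) (v : Fin n → ℝ),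
      eucNorm ((((G + H)⁻¹ * G) ^ r) *ᵥ v) ≤
        c * (spectralRadius ℂ (((G + H)⁻¹ * G).map Complex.ofReal)).toReal ^ r
          * eucNorm v := by
  -- trivial case `n = 0`
  rcases Nat.eq_zero_or_pos n with hn | hn
  · subst hn
    refine ⟨1, one_pos, fun r v => ?_⟩
    simp [eucNorm]
  -- setup
  set A : Matrix (Fin n) (Fin n) ℝ := G + H with hAdef
  have hA : A.PosDef := hG.add hH
  set M : Matrix (Fin n) (Fin n) ℝ := A⁻¹ * G with hMdef
  set S : Matrix (Fin n) (Fin n) ℝ := (open scoped MatrixOrder in CFC.sqrt A) with hSdef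
  have hSS : S * S = A := open scoped MatrixOrder in CFC.sqrt_mul_sqrt_self A (Matrix.nonneg_iff_posSemidef.mpr hA.posSemidef)
  have hdetA : A.det ≠ 0 := hA.det_pos.ne'
  have hdetS : S.det ≠ 0 := by
    intro h
    apply hdetA
    rw [← hSS, det_mul, h, mul_zero]
  have hStrans : Sᵀ = S := by
    ext i j
    have h := congrFun (congrFun (open scoped MatrixOrder in (Matrix.nonneg_iff_posSemidef.mp (CFC.sqrt_nonneg A)).isHermitian) i) j
    simpa [Matrix.conjTranspose_apply] using h
  have hGtrans : Gᵀ = G := by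
    ext i j
    have h := congrFun (congrFun hG.isHermitian i) j
    simpa [Matrix.conjTranspose_apply] using h
  -- complexifications
  set Sc : Matrix (Fin n) (Fin n) ℂ := S.map Complex.ofReal with hScdef
  set Gc : Matrix (Fin n) (Fin n) ℂ := G.map Complex.ofReal with hGcdef
  set Mc : Matrix (Fin n) (Fin n) ℂ := M.map Complex.ofReal with hMcdef
  have hdetSc : Sc.det ≠ 0 := by
    have : Sc.det = (S.det : ℂ) := by
      rw [show Sc = Complex.ofRealHom.mapMatrix S from rfl, ← RingHom.map_det]
      rfl
    rw [this]
    simpa using hdetS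
  have hdetScU : IsUnit Sc.det := isUnit_iff_ne_zero.mpr hdetSc
  have hinvl : Sc⁻¹ * Sc = 1 := Matrix.nonsing_inv_mul Sc hdetScU
  have hinvr : Sc * Sc⁻¹ = 1 := Matrix.mul_nonsing_inv Sc hdetScU
  set Nc : Matrix (Fin n) (Fin n) ℂ := Sc⁻¹ * Gc * Sc⁻¹ with hNcdef
  -- `Mc = Sc⁻¹ * Nc * Sc`
  have hAinvmap : (A⁻¹).map Complex.ofReal = Sc⁻¹ * Sc⁻¹ := by
    have h1 : A.map Complex.ofReal = Sc * Sc := by rw [← hSS, mapMulMat]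
    have h2 : (Sc * Sc) * (A⁻¹).map Complex.ofReal = 1 := by
      rw [← h1, ← mapMulMat, Matrix.mul_nonsing_inv A (isUnit_iff_ne_zero.mpr hdetA)]
      exact Matrix.map_one _ Complex.ofReal_zero Complex.ofReal_one
    have h3 := Matrix.inv_eq_right_inv h2
    rw [← h3, Matrix.mul_inv_rev]
  have hMcN : Mc = Sc⁻¹ * Nc * Sc := by
    rw [hMcdef, hMdef, mapMulMat, hAinvmap, hNcdef, ← hGcdef]
    simp only [mul_assoc, hinvl, mul_one]
  -- Hermitian facts
  have hScH : Scᴴ = Sc := mapHerm S hStrans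
  have hGcH : Gcᴴ = Gc := mapHerm G hGtrans
  have hNcH : IsSelfAdjoint Nc := by
    show Ncᴴ = Nc
    rw [hNcdef, conjTranspose_mul, conjTranspose_mul, conjTranspose_nonsing_inv, hScH, hGcH,
      mul_assoc]
  -- norm instances
  letI instNR : NormedRing (Matrix (Fin n) (Fin n) ℂ) := Matrix.instL2OpNormedRing
  letI instNA : NormedAlgebra ℂ (Matrix (Fin n) (Fin n) ℂ) := Matrix.instL2OpNormedAlgebra
  letI instCS : CStarRing (Matrix (Fin n) (Fin n) ℂ) := Matrix.instCStarRing
  letI instCplt : CompleteSpace (Matrix (Fin n) (Fin n) ℂ) := FiniteDimensional.complete ℂ _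
  letI instCSA : CStarAlgebra (Matrix (Fin n) (Fin n) ℂ) := {}
  haveI : Nonempty (Fin n) := ⟨⟨0, hn⟩⟩
  -- units and spectrum
  set u : (Matrix (Fin n) (Fin n) ℂ)ˣ := ⟨Sc, Sc⁻¹, hinvr, hinvl⟩ with hudef
  have hu : (↑u : Matrix (Fin n) (Fin n) ℂ) = Sc := rfl
  have hui : ((u⁻¹ : (Matrix (Fin n) (Fin n) ℂ)ˣ) : Matrix (Fin n) (Fin n) ℂ) = Sc⁻¹ := rfl
  have hMcU : Mc = ((u⁻¹ : (Matrix (Fin n) (Fin n) ℂ)ˣ) : Matrix (Fin n) (Fin n) ℂ) * Nc * (u : Matrix (Fin n) (Fin n) ℂ) := by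
    rw [hui, hu]; exact hMcN
  have hspec : spectrum ℂ Mc = spectrum ℂ Nc := by
    rw [hMcU]; exact spectrum.units_conjugate'
  have hrad : spectralRadius ℂ Mc = spectralRadius ℂ Nc := by
    unfold spectralRadius
    rw [hspec]
  have hnorm : (spectralRadius ℂ Mc).toReal = ‖Nc‖ := by
    rw [hrad, hNcH.spectralRadius_eq_nnnorm]
    simp
  -- power conjugation
  have hpow : ∀ r : ℕ, Mc ^ r = Sc⁻¹ * Nc ^ r * Sc := by
    intro r
    have key := Units.conj_pow u⁻¹ Nc r
    rw [inv_inv] at key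
    calc Mc ^ r
        = (((u⁻¹ : (Matrix (Fin n) (Fin n) ℂ)ˣ) : Matrix (Fin n) (Fin n) ℂ) * Nc * (u : Matrix (Fin n) (Fin n) ℂ)) ^ r := by
          rw [hMcU]
      _ = ((u⁻¹ : (Matrix (Fin n) (Fin n) ℂ)ˣ) : Matrix (Fin n) (Fin n) ℂ) * Nc ^ r * (u : Matrix (Fin n) (Fin n) ℂ) := key
      _ = Sc⁻¹ * Nc ^ r * Sc := by rw [hui, hu]
  have hc : (0:ℝ) < ‖Sc⁻¹‖ * ‖Sc‖ + 1 := by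
    have h0 : (0:ℝ) ≤ ‖Sc⁻¹‖ * ‖Sc‖ := mul_nonneg (norm_nonneg _) (norm_nonneg _)
    linarith
  refine ⟨‖Sc⁻¹‖ * ‖Sc‖ + 1, hc, fun r v => ?_⟩
  show eucNorm ((M ^ r) *ᵥ v) ≤
      (‖Sc⁻¹‖ * ‖Sc‖ + 1) * (spectralRadius ℂ Mc).toReal ^ r * eucNorm v
  rw [hnorm]
  have hM_pow_map : (M ^ r).map Complex.ofReal = Mc ^ r := by
    induction r with
    | zero => simpa using Matrix.map_one _ Complex.ofReal_zero Complex.ofReal_one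
    | succ k ih => rw [pow_succ, pow_succ, mapMulMat, ih]
  have hopbound : ‖Mc ^ r‖ ≤ (‖Sc⁻¹‖ * ‖Sc‖ + 1) * ‖Nc‖ ^ r := by
    rcases Nat.eq_zero_or_pos r with hr | hr
    · subst hr
      simp only [pow_zero, mul_one]
      calc ‖(Mc ^ 0 : Matrix (Fin n) (Fin n) ℂ)‖ = ‖(1 : Matrix (Fin n) (Fin n) ℂ)‖ := by
            rw [pow_zero]
        _ = 1 := norm_one
        _ ≤ ‖Sc⁻¹‖ * ‖Sc‖ + 1 := by
            have h0 : (0:ℝ) ≤ ‖Sc⁻¹‖ * ‖Sc‖ := by positivity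
            linarith
    · calc ‖Mc ^ r‖ = ‖Sc⁻¹ * Nc ^ r * Sc‖ := by rw [hpow]
        _ ≤ ‖Sc⁻¹ * Nc ^ r‖ * ‖Sc‖ := norm_mul_le _ _
        _ ≤ ‖Sc⁻¹‖ * ‖Nc ^ r‖ * ‖Sc‖ := by
            gcongr
            exact norm_mul_le _ _
        _ ≤ ‖Sc⁻¹‖ * ‖Nc‖ ^ r * ‖Sc‖ := by
            gcongr
            exact norm_pow_le' Nc hr
        _ = ‖Sc⁻¹‖ * ‖Sc‖ * ‖Nc‖ ^ r := by ring
        _ ≤ (‖Sc⁻¹‖ * ‖Sc‖ + 1) * ‖Nc‖ ^ r := by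
            have h1 : (0:ℝ) ≤ ‖Nc‖ ^ r := by positivity
            nlinarith
  -- vector norms
  have h2 : (WithLp.equiv 2 (Fin n → ℂ)).symm (fun i => (((M ^ r) *ᵥ v) i : ℂ)) =
      (WithLp.equiv 2 (Fin n → ℂ)).symm ((Mc ^ r) *ᵥ (fun j => (v j : ℂ))) := by
    have h3 := mapMulVec (M ^ r) v
    rw [hM_pow_map] at h3
    exact congrArg _ h3
  have hkey : eucNorm ((M ^ r) *ᵥ v) ≤ ‖Mc ^ r‖ * eucNorm v := by
    rw [eucNorm_eq ((M ^ r) *ᵥ v), congrArg norm h2, eucNorm_eq v]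
    exact Matrix.l2_opNorm_mulVec (Mc ^ r) ((WithLp.equiv 2 (Fin n → ℂ)).symm fun j => (v j : ℂ))
  calc eucNorm ((M ^ r) *ᵥ v) ≤ ‖Mc ^ r‖ * eucNorm v := hkey
    _ ≤ ((‖Sc⁻¹‖ * ‖Sc‖ + 1) * ‖Nc‖ ^ r) * eucNorm v :=
        mul_le_mul_of_nonneg_right hopbound (Real.sqrt_nonneg _)
end

section
/- Let G and H be real symmetric positive definite n×n matrices and let r be a natural number. Then every eigenvalue of the matrix I − ((G+H)⁻¹G)^{r+1} (viewed as a complex matrix) is real and lies in the open interval (0,1). -/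
open Matrix

variable {m : Type*} [Fintype m] [DecidableEq m]

lemma myPosDef_conj {A : Matrix m m ℝ} (B : Matrix m m ℝ)
    (hA : A.PosDef) (hB : IsUnit B) : (Bᴴ * A * B).PosDef := by
  refine Matrix.PosDef.of_dotProduct_mulVec_pos (isHermitian_conjTranspose_mul_mul B hA.1) fun x hx => ?_
  have hx' : B *ᵥ x ≠ 0 :=
    ((Matrix.mulVec_injective_iff_isUnit.mpr hB).ne_iff' (Matrix.mulVec_zero B)).2 hx
  simpa only [star_mulVec, dotProduct_mulVec, vecMul_vecMul] using hA.dotProduct_mulVec_pos hx'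

lemma myconj_pow {R : Type*} [CommRing R] {V W D : Matrix m m R}
    (hVW : V * W = 1) (hWV : W * V = 1) (k : ℕ) :
    (V * D * W) ^ k = V * D ^ k * W := by
  induction k with
  | zero => simp [hVW]
  | succ k ih =>
    rw [pow_succ, ih, pow_succ]
    calc V * D ^ k * W * (V * D * W) = V * D ^ k * (W * V) * (D * W) := by
          simp only [Matrix.mul_assoc]
      _ = V * (D ^ k * D) * W := by rw [hWV]; simp only [Matrix.mul_one, Matrix.mul_assoc]

lemma myPosDef_pow {A : Matrix m m ℝ} (hA : A.PosDef) :
    ∀ k : ℕ, (A ^ k).PosDef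
  | 0 => by simpa using (Matrix.PosDef.one : (1 : Matrix m m ℝ).PosDef)
  | 1 => by simpa using hA
  | (k + 2) => by
    rw [pow_succ, pow_succ']
    simpa only [hA.isHermitian.eq] using myPosDef_conj A (myPosDef_pow hA k) hA.isUnit

lemma myEigenvalues_lt_one {A : Matrix m m ℝ} (hA : A.PosDef) (h1 : (1 - A).PosDef) (i : m) :
    hA.1.eigenvalues i < 1 := by
  have hv := hA.1.mulVec_eigenvectorBasis i
  set v : m → ℝ := ⇑(hA.1.eigenvectorBasis i) with hvdef
  have hv0 : v ≠ 0 := by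
    intro h
    apply hA.1.eigenvectorBasis.orthonormal.ne_zero i
    ext j
    exact congrFun h j
  have hvv : 0 < v ⬝ᵥ v := by
    have := Matrix.dotProduct_star_self_pos_iff (R := ℝ) (v := v)
    simpa [star_trivial] using this.mpr hv0
  have h2 := h1.dotProduct_mulVec_pos hv0
  rw [Matrix.sub_mulVec, Matrix.one_mulVec, hv] at h2
  have : (0:ℝ) < v ⬝ᵥ v - hA.1.eigenvalues i * (v ⬝ᵥ v) := by
    simpa [star_trivial, dotProduct_sub, dotProduct_smul, smul_eq_mul] using h2
  nlinarith

lemma myKey {B : Matrix m m ℝ} (hB : B.PosDef) (h1B : (1 - B).PosDef) :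
    ∀ μ ∈ spectrum ℂ (B.map Complex.ofReal), ∃ t : ℝ, μ = (t : ℂ) ∧ 0 < t ∧ t < 1 := by
  intro μ hμ
  set U : Matrix m m ℝ := (hB.1.eigenvectorUnitary : Matrix m m ℝ) with hU
  have hU2 : star U * U = 1 := Unitary.star_mul_self_of_mem (hB.1.eigenvectorUnitary).2
  have hU1 : U * star U = 1 := Unitary.mul_star_self_of_mem (hB.1.eigenvectorUnitary).2
  have hspec := hB.1.spectral_theorem
  set d : m → ℝ := hB.1.eigenvalues with hd
  let F : Matrix m m ℝ →+* Matrix m m ℂ := (Complex.ofRealHom).mapMatrix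
  have hmap : B.map Complex.ofReal = F U * diagonal (fun i => (d i : ℂ)) * F (star U) := by
    have : F B = F U * F (diagonal (RCLike.ofReal ∘ d)) * F (star U) := by
      rw [← _root_.map_mul, ← _root_.map_mul]; exact congrArg F hspec
    rw [show B.map Complex.ofReal = F B from rfl, this]
    congr 1
    rw [show F (diagonal (RCLike.ofReal ∘ d)) = (diagonal (RCLike.ofReal ∘ d)).map Complex.ofReal from rfl,
      Matrix.diagonal_map (by simp)]
    rfl
  set u : (Matrix m m ℂ)ˣ :=
    ⟨F U, F (star U), by rw [← _root_.map_mul, hU1, _root_.map_one], by rw [← _root_.map_mul, hU2, _root_.map_one]⟩ with hu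
  have hcu : (↑u⁻¹ : Matrix m m ℂ) = F (star U) := rfl
  have : μ ∈ spectrum ℂ (diagonal (fun i => (d i : ℂ))) := by
    rw [← spectrum.units_conjugate (u := u)]
    show μ ∈ spectrum ℂ ((F U) * _ * (F (star U)))
    rw [← hmap]; exact hμ
  rw [spectrum_diagonal] at this
  obtain ⟨i, hi⟩ := this
  exact ⟨d i, hi.symm, hB.eigenvalues_pos i, myEigenvalues_lt_one hB h1B i⟩

/-- Every eigenvalue of `I − ((G+H)⁻¹G)^{r+1}` (as a complex matrix) is a real number
in the open interval `(0,1)`. -/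
theorem stmt8 {n : ℕ} (G H : Matrix (Fin n) (Fin n) ℝ)
    (hG : G.PosDef) (hH : H.PosDef) (r : ℕ) :
    ∀ μ ∈ spectrum ℂ ((1 - ((G + H)⁻¹ * G) ^ (r + 1)).map (Complex.ofReal)),
      ∃ t : ℝ, μ = (t : ℂ) ∧ 0 < t ∧ t < 1 := by
  intro μ hμ
  classical
  set S := G + H with hSdef
  have hS : S.PosDef := hG.add hH
  have hRex : ∃ R : Matrix (Fin n) (Fin n) ℝ, R.IsHermitian ∧ R * R = S := by
    open MatrixOrder in
    exact ⟨CFC.sqrt S, (CFC.sqrt_nonneg S).posSemidef.1,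
      CFC.sqrt_mul_sqrt_self S hS.posSemidef.nonneg⟩
  obtain ⟨R, hRH, hRR⟩ := hRex
  have hdetR : IsUnit R.det := by
    have hdm : R.det * R.det = S.det := by rw [← Matrix.det_mul, hRR]
    refine isUnit_iff_ne_zero.mpr (fun h => ?_)
    rw [h, mul_zero] at hdm
    exact hS.det_pos.ne' hdm.symm
  have hRu : IsUnit R := (Matrix.isUnit_iff_isUnit_det R).mpr hdetR
  have hRiR : R⁻¹ * R = 1 := Matrix.nonsing_inv_mul R hdetR
  have hRRi : R * R⁻¹ = 1 := Matrix.mul_nonsing_inv R hdetR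
  have hRinvH : (R⁻¹)ᴴ = R⁻¹ := by rw [Matrix.conjTranspose_nonsing_inv, hRH.eq]
  have hRiu : IsUnit R⁻¹ := Matrix.isUnit_nonsing_inv_iff.mpr hRu
  set A := R⁻¹ * G * R⁻¹ with hAdef
  have hA : A.PosDef := by
    have := myPosDef_conj (R⁻¹) hG hRiu
    rwa [hRinvH] at this
  have hRSR : R⁻¹ * S * R⁻¹ = 1 := by
    rw [← hRR]
    calc R⁻¹ * (R * R) * R⁻¹ = (R⁻¹ * R) * (R * R⁻¹) := by simp only [Matrix.mul_assoc]
      _ = 1 := by rw [hRiR, hRRi, one_mul]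
  have h1A : (1 - A).PosDef := by
    have hH' : (R⁻¹ * H * R⁻¹).PosDef := by
      have := myPosDef_conj (R⁻¹) hH hRiu
      rwa [hRinvH] at this
    have heq : 1 - A = R⁻¹ * H * R⁻¹ := by
      have hHeq : H = S - G := by rw [hSdef]; abel
      rw [hHeq, Matrix.mul_sub, Matrix.sub_mul, hRSR, hAdef]
    rwa [heq]
  -- eigen-decomposition of A and positivity of 1 - A^(r+1)
  set UA : Matrix (Fin n) (Fin n) ℝ := (hA.1.eigenvectorUnitary : Matrix (Fin n) (Fin n) ℝ)
    with hUAdef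
  have hUA2 : star UA * UA = 1 := Unitary.star_mul_self_of_mem (hA.1.eigenvectorUnitary).2
  have hUA1 : UA * star UA = 1 := Unitary.mul_star_self_of_mem (hA.1.eigenvectorUnitary).2
  have hUAsu : IsUnit (star UA) := by
    refine (Matrix.isUnit_iff_isUnit_det _).mpr (isUnit_iff_ne_zero.mpr fun h => ?_)
    have : (star UA).det * UA.det = (1 : ℝ) := by rw [← Matrix.det_mul, hUA2, Matrix.det_one]
    rw [h, zero_mul] at this
    exact one_ne_zero this.symm
  have hApow_eq : A ^ (r + 1)
      = UA * (diagonal (RCLike.ofReal ∘ hA.1.eigenvalues)) ^ (r + 1) * star UA := by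
    rw [← myconj_pow hUA1 hUA2]
    exact congrArg (· ^ (r + 1)) hA.1.spectral_theorem
  have hBpos : (1 - A ^ (r + 1)).PosDef := by
    have heq : 1 - A ^ (r + 1) = (star UA)ᴴ
        * diagonal (fun i => 1 - ((RCLike.ofReal ∘ hA.1.eigenvalues) i) ^ (r + 1))
        * star UA := by
      rw [Matrix.star_eq_conjTranspose, Matrix.conjTranspose_conjTranspose, hApow_eq,
        ← Matrix.star_eq_conjTranspose]
      have h1 : (1 : Matrix (Fin n) (Fin n) ℝ) = UA * 1 * star UA := by rw [mul_one, hUA1]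
      rw [Matrix.diagonal_pow]
      nth_rewrite 1 [h1]
      rw [← Matrix.sub_mul, ← Matrix.mul_sub]
      congr 1
      congr 1
      rw [← Matrix.diagonal_one, Matrix.diagonal_sub]
      rfl
    rw [heq]
    refine myPosDef_conj _ ?_ hUAsu
    refine Matrix.posDef_diagonal_iff.mpr fun i => ?_
    have h0 : 0 < hA.1.eigenvalues i := hA.eigenvalues_pos i
    have h1 : hA.1.eigenvalues i < 1 := myEigenvalues_lt_one hA h1A i
    have hlt : hA.1.eigenvalues i ^ (r + 1) < 1 := pow_lt_one₀ h0.le h1 (by omega)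
    simp only [Function.comp_apply, RCLike.ofReal_real_eq_id, id_eq]
    linarith
  -- similarity
  have hSiG : S⁻¹ * G = R⁻¹ * A * R := by
    rw [hAdef, ← hRR, Matrix.mul_inv_rev]
    calc R⁻¹ * R⁻¹ * G = R⁻¹ * R⁻¹ * G * 1 := by rw [mul_one]
      _ = R⁻¹ * R⁻¹ * G * (R⁻¹ * R) := by rw [hRiR]
      _ = R⁻¹ * (R⁻¹ * G * R⁻¹) * R := by simp only [Matrix.mul_assoc]
  have hM : 1 - (S⁻¹ * G) ^ (r + 1) = R⁻¹ * (1 - A ^ (r + 1)) * R := by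
    rw [hSiG, myconj_pow hRiR hRRi, Matrix.mul_sub, Matrix.sub_mul, Matrix.mul_one, hRiR]
  -- move to ℂ
  set F : Matrix (Fin n) (Fin n) ℝ →+* Matrix (Fin n) (Fin n) ℂ :=
    Complex.ofRealHom.mapMatrix with hF
  set u : (Matrix (Fin n) (Fin n) ℂ)ˣ :=
    ⟨F R, F R⁻¹, by rw [← _root_.map_mul, hRRi, _root_.map_one],
      by rw [← _root_.map_mul, hRiR, _root_.map_one]⟩ with hu
  have hmapM : (1 - (S⁻¹ * G) ^ (r + 1)).map Complex.ofReal
      = (↑u⁻¹ : Matrix (Fin n) (Fin n) ℂ) * ((1 - A ^ (r + 1)).map Complex.ofReal) * (↑u : Matrix (Fin n) (Fin n) ℂ) := by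
    show F (1 - (S⁻¹ * G) ^ (r + 1)) = F R⁻¹ * F (1 - A ^ (r + 1)) * F R
    rw [hM, _root_.map_mul, _root_.map_mul]
  rw [hmapM, spectrum.units_conjugate'] at hμ
  have h1B : (1 - (1 - A ^ (r + 1))).PosDef := by
    rw [sub_sub_cancel]
    exact myPosDef_pow hA (r + 1)
  exact myKey hBpos h1B μ hμ
end

section
/- Let G be a fixed real symmetric positive definite n×n matrix and let r be a natural number. Let H : ℝⁿ → ℝ^{n×n} be a matrix-valued map, differentiable at a point U* ∈ ℝⁿ, such that H(U) is symmetric positive definite for all U. Let g : ℝⁿ → ℝⁿ be differentiable at U* with g(U*) = 0 and with Fréchet derivative Dg(U*) given by multiplication by the matrix H(U*). Define v(U) = (I − ((G+H(U))⁻¹G)^{r+1}) H(U)⁻¹ g(U). Then v(U*) = 0 and the Fréchet derivative of v at U* is given by multiplication by the matrix I − ((G+H(U*))⁻¹G)^{r+1}. -/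
set_option maxHeartbeats 1000000


open Matrix

section Aux

/-- Entrywise (sup-type) norm instances on matrices, transported from the pi type. -/
noncomputable instance matNACG {n : ℕ} : NormedAddCommGroup (Matrix (Fin n) (Fin n) ℝ) :=
  inferInstanceAs (NormedAddCommGroup (Fin n → Fin n → ℝ))

noncomputable instance matNS {n : ℕ} : NormedSpace ℝ (Matrix (Fin n) (Fin n) ℝ) :=
  inferInstanceAs (NormedSpace ℝ (Fin n → Fin n → ℝ))

variable {n : ℕ} {x : Fin n → ℝ}

private lemma mdiff_det {F : (Fin n → ℝ) → Matrix (Fin n) (Fin n) ℝ}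
    (h : ∀ i j, DifferentiableAt ℝ (fun U => F U i j) x) :
    DifferentiableAt ℝ (fun U => (F U).det) x := by
  simp only [Matrix.det_apply']
  refine DifferentiableAt.fun_sum fun σ _ => ?_
  refine DifferentiableAt.const_mul ?_ _
  exact (HasFDerivAt.finset_prod (u := Finset.univ)
    (g := fun i U => F U (σ i) i)
    (g' := fun i => fderiv ℝ (fun U => F U (σ i) i) x)
    (fun i _ => (h (σ i) i).hasFDerivAt)).differentiableAt

private lemma mdiff_inv {F : (Fin n → ℝ) → Matrix (Fin n) (Fin n) ℝ}
    (h : ∀ i j, DifferentiableAt ℝ (fun U => F U i j) x)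
    (hd : (F x).det ≠ 0) :
    ∀ i j, DifferentiableAt ℝ (fun U => (F U)⁻¹ i j) x := by
  intro i j
  have : (fun U => (F U)⁻¹ i j)
      = fun U => (Ring.inverse (F U).det) * (F U).adjugate i j := by
    funext U
    rw [Matrix.inv_def, Matrix.smul_apply, smul_eq_mul]
  rw [this]
  have hinv : DifferentiableAt ℝ (fun U => Ring.inverse (F U).det) x := by
    simp only [Ring.inverse_eq_inv']
    exact (mdiff_det h).inv hd
  refine hinv.mul ?_
  simp only [Matrix.adjugate_apply]
  refine mdiff_det fun k l => ?_
  simp only [Matrix.updateRow_apply]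
  by_cases hk : k = j
  · simp [hk]
  · simp only [hk, if_false]
    exact h k l

private lemma mdiff_mul {F F' : (Fin n → ℝ) → Matrix (Fin n) (Fin n) ℝ}
    (h : ∀ i j, DifferentiableAt ℝ (fun U => F U i j) x)
    (h' : ∀ i j, DifferentiableAt ℝ (fun U => F' U i j) x) :
    ∀ i j, DifferentiableAt ℝ (fun U => (F U * F' U) i j) x := by
  intro i j
  simp only [Matrix.mul_apply]
  exact DifferentiableAt.fun_sum fun k _ => (h i k).mul (h' k j)

private lemma mdiff_pow {F : (Fin n → ℝ) → Matrix (Fin n) (Fin n) ℝ}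
    (h : ∀ i j, DifferentiableAt ℝ (fun U => F U i j) x) (k : ℕ) :
    ∀ i j, DifferentiableAt ℝ (fun U => ((F U) ^ k) i j) x := by
  induction k with
  | zero => intro i j; simp only [pow_zero]; exact differentiableAt_const _
  | succ m ih =>
      intro i j
      simp only [pow_succ]
      exact mdiff_mul ih h i j

/-- `mulVec` as a continuous linear map in the vector argument. -/
noncomputable def mulVecCLM (A : Matrix (Fin n) (Fin n) ℝ) :
    (Fin n → ℝ) →L[ℝ] (Fin n → ℝ) :=
  LinearMap.toContinuousLinearMap A.mulVecLin

/-- `mulVec` as a continuous bilinear map. -/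
noncomputable def mulVecCLM₂ (n : ℕ) :
    Matrix (Fin n) (Fin n) ℝ →L[ℝ] (Fin n → ℝ) →L[ℝ] (Fin n → ℝ) :=
  LinearMap.toContinuousLinearMap
    { toFun := mulVecCLM
      map_add' := by
        intro A B
        ext w i
        simp [mulVecCLM, Matrix.add_mulVec]
      map_smul' := by
        intro c A
        ext w i
        simp [mulVecCLM, Matrix.smul_mulVec] }

@[simp] lemma mulVecCLM₂_apply (A : Matrix (Fin n) (Fin n) ℝ) (w : Fin n → ℝ) :
    mulVecCLM₂ n A w = A *ᵥ w := by
  simp [mulVecCLM₂, mulVecCLM]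

end Aux

/-- If `g(U*) = 0` and `Dg(U*) = H(U*)·`, then
`v(U) = (I − ((G+H(U))⁻¹G)^{r+1}) H(U)⁻¹ g(U)` satisfies `v(U*) = 0` and its Fréchet
derivative at `U*` is multiplication by `I − ((G+H(U*))⁻¹G)^{r+1}`. -/
theorem stmt9 {n : ℕ} (G : Matrix (Fin n) (Fin n) ℝ) (hG : G.PosDef) (r : ℕ)
    (H : (Fin n → ℝ) → Matrix (Fin n) (Fin n) ℝ) (Ustar : Fin n → ℝ)
    (hHdiff : ∀ i j, DifferentiableAt ℝ (fun U => H U i j) Ustar)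
    (hHpd : ∀ U, (H U).PosDef)
    (g : (Fin n → ℝ) → Fin n → ℝ) (hg0 : g Ustar = 0)
    (Lg : (Fin n → ℝ) →L[ℝ] (Fin n → ℝ)) (hLg : ∀ w, Lg w = H Ustar *ᵥ w)
    (hg : HasFDerivAt g Lg Ustar)
    (v : (Fin n → ℝ) → Fin n → ℝ)
    (hv : ∀ U, v U = ((1 - ((G + H U)⁻¹ * G) ^ (r + 1)) * (H U)⁻¹) *ᵥ g U) :
    v Ustar = 0 ∧
    ∃ Lv : (Fin n → ℝ) →L[ℝ] (Fin n → ℝ), HasFDerivAt v Lv Ustar ∧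
      ∀ w, Lv w = (1 - ((G + H Ustar)⁻¹ * G) ^ (r + 1)) *ᵥ w := by
  classical
  have hv0 : v Ustar = 0 := by rw [hv, hg0, Matrix.mulVec_zero]
  refine ⟨hv0, ?_⟩
  have hGH : ∀ i j, DifferentiableAt ℝ (fun U => (G + H U) i j) Ustar := by
    intro i j
    simp only [Matrix.add_apply]
    exact (differentiableAt_const _).add (hHdiff i j)
  have hGHpd : ∀ U, (G + H U).PosDef := fun U => hG.add (hHpd U)
  have hdetGH : ((G + H Ustar).det ≠ 0) := (hGHpd Ustar).det_pos.ne'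
  have hdetH : ((H Ustar).det ≠ 0) := (hHpd Ustar).det_pos.ne'
  have hMdiff : ∀ i j, DifferentiableAt ℝ
      (fun U => ((1 - ((G + H U)⁻¹ * G) ^ (r + 1)) * (H U)⁻¹) i j) Ustar := by
    refine mdiff_mul (F := fun U => 1 - ((G + H U)⁻¹ * G) ^ (r + 1))
      (F' := fun U => (H U)⁻¹) ?_ (mdiff_inv hHdiff hdetH)
    intro i j
    have h1 : ∀ i j, DifferentiableAt ℝ
        (fun U => (((G + H U)⁻¹ * G) ^ (r + 1)) i j) Ustar :=
      mdiff_pow (F := fun U => (G + H U)⁻¹ * G)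
        (mdiff_mul (F := fun U => (G + H U)⁻¹) (F' := fun _ => G)
          (mdiff_inv hGH hdetGH) (fun i j => differentiableAt_const _)) (r + 1)
    simp only [Matrix.sub_apply]
    exact (differentiableAt_const _).sub (h1 i j)
  have hMdiff' : DifferentiableAt ℝ
      (fun U => (1 - ((G + H U)⁻¹ * G) ^ (r + 1)) * (H U)⁻¹) Ustar := by
    have : DifferentiableAt ℝ
        (fun U => (fun i j => ((1 - ((G + H U)⁻¹ * G) ^ (r + 1)) * (H U)⁻¹) i j)) Ustar := by
      rw [differentiableAt_pi]
      intro i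
      rw [differentiableAt_pi]
      intro j
      exact hMdiff i j
    exact this
  obtain ⟨LM, hLM⟩ := hMdiff'
  have hB : IsBoundedBilinearMap ℝ
      (fun p : Matrix (Fin n) (Fin n) ℝ × (Fin n → ℝ) => mulVecCLM₂ n p.1 p.2) :=
    (mulVecCLM₂ n).isBoundedBilinearMap
  have hveq : v = fun U =>
      mulVecCLM₂ n ((1 - ((G + H U)⁻¹ * G) ^ (r + 1)) * (H U)⁻¹) (g U) := by
    funext U
    rw [hv U, mulVecCLM₂_apply]
  have hprod : HasFDerivAt
      (fun U => ((1 - ((G + H U)⁻¹ * G) ^ (r + 1)) * (H U)⁻¹, g U))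
      (LM.prod Lg) Ustar := HasFDerivAt.prodMk hLM hg
  have hcomp : HasFDerivAt v
      ((hB.deriv ((1 - ((G + H Ustar)⁻¹ * G) ^ (r + 1)) * (H Ustar)⁻¹, g Ustar)).comp
        (LM.prod Lg)) Ustar := by
    rw [hveq]
    exact (hB.hasFDerivAt _).comp Ustar hprod
  refine ⟨_, hcomp, ?_⟩
  intro w
  have hkey : (1 - ((G + H Ustar)⁻¹ * G) ^ (r + 1)) * (H Ustar)⁻¹ * H Ustar
      = 1 - ((G + H Ustar)⁻¹ * G) ^ (r + 1) := by
    rw [mul_assoc, Matrix.nonsing_inv_mul _ (isUnit_iff_ne_zero.2 hdetH), mul_one]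
  calc ((hB.deriv ((1 - ((G + H Ustar)⁻¹ * G) ^ (r + 1)) * (H Ustar)⁻¹, g Ustar)).comp
        (LM.prod Lg)) w
      = mulVecCLM₂ n ((1 - ((G + H Ustar)⁻¹ * G) ^ (r + 1)) * (H Ustar)⁻¹) (Lg w)
        + mulVecCLM₂ n (LM w) (g Ustar) := by
        rw [ContinuousLinearMap.comp_apply, hB.deriv_apply]
        rfl
    _ = (1 - ((G + H Ustar)⁻¹ * G) ^ (r + 1)) *ᵥ w := by
        rw [hg0, mulVecCLM₂_apply, mulVecCLM₂_apply, Matrix.mulVec_zero, add_zero,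
          hLg, Matrix.mulVec_mulVec, hkey]
end

section
/- Let f : ℝᵖ × ℝᵐ → ℝᵖ be continuously differentiable, ℓ : ℝᵖ → ℝ and Φ : ℝᵖ → ℝ continuously differentiable, R a symmetric m×m real matrix, a ∈ ℝᵖ, and N a natural number. For a control sequence u = (u(0),…,u(N)) ∈ (ℝᵐ)^{N+1}, define the state trajectory by x(0) = a and x(k+1) = f(x(k),u(k)) for 0 ≤ k ≤ N, and the cost J(u) = Σ_{k=0}^{N} ( ℓ(x(k)) + ½ u(k)ᵀ R u(k) ) + Φ(x(N+1)). Define the costate sequence backward by λ(N+1) = ∇Φ(x(N+1)) and λ(k) = ∇ℓ(x(k)) + (∂f/∂x (x(k),u(k)))ᵀ λ(k+1) for 1 ≤ k ≤ N. Then for each 0 ≤ k ≤ N, the partial gradient of J with respect to the block variable u(k) equals R u(k) + (∂f/∂u (x(k),u(k)))ᵀ λ(k+1). -/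
open Matrix
open Fin.NatCast

/-- The state trajectory generated from initial state `a` by the control sequence
`u = (u(0),…,u(N))` through the dynamics `x(k+1) = f(x(k),u(k))`. -/
noncomputable def traj {p m N : ℕ} (f : (Fin p → ℝ) → (Fin m → ℝ) → Fin p → ℝ)
    (a : Fin p → ℝ) (u : Fin (N + 1) → Fin m → ℝ) : ℕ → Fin p → ℝ
  | 0 => a
  | k + 1 => f (traj f a u k) (u k)

/-- The cost `J(u) = Σ_{k=0}^{N} ( ℓ(x(k)) + ½ u(k)ᵀ R u(k) ) + Φ(x(N+1))`. -/
noncomputable def cost {p m N : ℕ} (f : (Fin p → ℝ) → (Fin m → ℝ) → Fin p → ℝ)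
    (ℓ : (Fin p → ℝ) → ℝ) (Φ : (Fin p → ℝ) → ℝ) (R : Matrix (Fin m) (Fin m) ℝ)
    (a : Fin p → ℝ) (u : Fin (N + 1) → Fin m → ℝ) : ℝ :=
  (∑ k ∈ Finset.range (N + 1),
    (ℓ (traj f a u k) + (1 / 2) * (u k ⬝ᵥ R *ᵥ u k))) + Φ (traj f a u (N + 1))

noncomputable def ttraj {p m N : ℕ} (f : (Fin p → ℝ) → (Fin m → ℝ) → Fin p → ℝ)
    (u : Fin (N + 1) → Fin m → ℝ) (j : ℕ) (y : Fin p → ℝ) : ℕ → Fin p → ℝ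
  | 0 => y
  | i + 1 => f (ttraj f u j y i) (u ((j + i : ℕ) : Fin (N + 1)))

noncomputable def tcost {p m N : ℕ} (f : (Fin p → ℝ) → (Fin m → ℝ) → Fin p → ℝ)
    (ℓ : (Fin p → ℝ) → ℝ) (Φ : (Fin p → ℝ) → ℝ)
    (u : Fin (N + 1) → Fin m → ℝ) (j : ℕ) (y : Fin p → ℝ) : ℝ :=
  (∑ i ∈ Finset.range (N + 1 - j), ℓ (ttraj f u j y i)) + Φ (ttraj f u j y (N + 1 - j))

lemma ttraj_traj {p m N : ℕ} (f : (Fin p → ℝ) → (Fin m → ℝ) → Fin p → ℝ)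
    (a : Fin p → ℝ) (u : Fin (N + 1) → Fin m → ℝ) (j : ℕ) :
    ∀ i, ttraj f u j (traj f a u j) i = traj f a u (j + i) := by
  intro i
  induction i with
  | zero => simp [ttraj]
  | succ i ih =>
      show f (ttraj f u j (traj f a u j) i) (u ((j + i : ℕ) : Fin (N + 1))) = _
      rw [ih]
      have : j + (i + 1) = (j + i) + 1 := by omega
      rw [this]
      rfl

lemma ttraj_succ {p m N : ℕ} (f : (Fin p → ℝ) → (Fin m → ℝ) → Fin p → ℝ)
    (u : Fin (N + 1) → Fin m → ℝ) (j : ℕ) (y : Fin p → ℝ) :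
    ∀ i, ttraj f u (j + 1) (f y (u (j : Fin (N + 1)))) i = ttraj f u j y (i + 1) := by
  intro i
  induction i with
  | zero => show f y _ = f (ttraj f u j y 0) (u ((j + 0 : ℕ) : Fin (N + 1))); simp [ttraj]
  | succ i ih =>
      show f (ttraj f u (j+1) (f y (u (j : Fin (N+1)))) i) (u (((j+1) + i : ℕ) : Fin (N + 1))) =
        f (ttraj f u j y (i+1)) (u ((j + (i+1) : ℕ) : Fin (N + 1)))
      rw [ih, show (j+1) + i = j + (i+1) from by omega]

lemma tcost_succ {p m N : ℕ} (f : (Fin p → ℝ) → (Fin m → ℝ) → Fin p → ℝ)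
    (ℓ : (Fin p → ℝ) → ℝ) (Φ : (Fin p → ℝ) → ℝ)
    (u : Fin (N + 1) → Fin m → ℝ) (j : ℕ) (hj : j ≤ N) (y : Fin p → ℝ) :
    tcost f ℓ Φ u j y = ℓ y + tcost f ℓ Φ u (j + 1) (f y (u (j : Fin (N + 1)))) := by
  have h1 : N + 1 - j = (N - j) + 1 := by omega
  have h2 : N + 1 - (j + 1) = N - j := by omega
  rw [tcost, tcost, h1, h2, Finset.sum_range_succ']
  have h3 : ∀ i, ttraj f u (j + 1) (f y (u (j : Fin (N + 1)))) i = ttraj f u j y (i + 1) :=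
    ttraj_succ f u j y
  simp only [h3]
  have : ttraj f u j y 0 = y := rfl
  rw [this]
  ring

lemma tcost_top {p m N : ℕ} (f : (Fin p → ℝ) → (Fin m → ℝ) → Fin p → ℝ)
    (ℓ : (Fin p → ℝ) → ℝ) (Φ : (Fin p → ℝ) → ℝ)
    (u : Fin (N + 1) → Fin m → ℝ) : tcost f ℓ Φ u (N + 1) = Φ := by
  funext y
  simp [tcost, ttraj]

lemma ttraj_diff {p m N : ℕ} {f : (Fin p → ℝ) → (Fin m → ℝ) → Fin p → ℝ}
    (hf : ContDiff ℝ 1 (fun q : (Fin p → ℝ) × (Fin m → ℝ) => f q.1 q.2))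
    (u : Fin (N + 1) → Fin m → ℝ) (j : ℕ) :
    ∀ i, Differentiable ℝ (fun y => ttraj f u j y i) := by
  have hf1 : ∀ v, Differentiable ℝ (fun y => f y v) := fun v =>
    (hf.differentiable one_ne_zero).comp (differentiable_id.prodMk (differentiable_const v))
  intro i
  induction i with
  | zero => exact differentiable_id
  | succ i ih => exact (hf1 _).comp ih

lemma tcost_diff {p m N : ℕ} {f : (Fin p → ℝ) → (Fin m → ℝ) → Fin p → ℝ}
    (hf : ContDiff ℝ 1 (fun q : (Fin p → ℝ) × (Fin m → ℝ) => f q.1 q.2))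
    {ℓ : (Fin p → ℝ) → ℝ} (hℓ : ContDiff ℝ 1 ℓ)
    {Φ : (Fin p → ℝ) → ℝ} (hΦ : ContDiff ℝ 1 Φ)
    (u : Fin (N + 1) → Fin m → ℝ) (j : ℕ) :
    Differentiable ℝ (tcost f ℓ Φ u j) := by
  have h1 : ∀ i, Differentiable ℝ (fun y => ℓ (ttraj f u j y i)) := fun i =>
    (hℓ.differentiable one_ne_zero).comp (ttraj_diff hf u j i)
  have h2 : Differentiable ℝ (fun y => Φ (ttraj f u j y (N + 1 - j))) :=
    (hΦ.differentiable one_ne_zero).comp (ttraj_diff hf u j _)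
  exact (Differentiable.fun_sum (fun i _ => h1 i)).add h2

/-- Adjoint (costate) computation of the gradient of `J`: the partial gradient of `J`
with respect to the block `u(k)` equals `R u(k) + (∂f/∂u (x(k),u(k)))ᵀ λ(k+1)`. -/
theorem stmt11 {p m N : ℕ}
    (f : (Fin p → ℝ) → (Fin m → ℝ) → Fin p → ℝ)
    (hf : ContDiff ℝ 1 (fun q : (Fin p → ℝ) × (Fin m → ℝ) => f q.1 q.2))
    (ℓ : (Fin p → ℝ) → ℝ) (hℓ : ContDiff ℝ 1 ℓ)
    (Φ : (Fin p → ℝ) → ℝ) (hΦ : ContDiff ℝ 1 Φ)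
    (R : Matrix (Fin m) (Fin m) ℝ) (hR : Rᵀ = R)
    (a : Fin p → ℝ)
    (fx : (Fin p → ℝ) → (Fin m → ℝ) → Matrix (Fin p) (Fin p) ℝ)
    (hfx : ∀ x u w, fderiv ℝ (fun y => f y u) x w = fx x u *ᵥ w)
    (fu : (Fin p → ℝ) → (Fin m → ℝ) → Matrix (Fin p) (Fin m) ℝ)
    (hfu : ∀ x u w, fderiv ℝ (fun z => f x z) u w = fu x u *ᵥ w)
    (gl : (Fin p → ℝ) → Fin p → ℝ)
    (hgl : ∀ x w, fderiv ℝ ℓ x w = gl x ⬝ᵥ w)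
    (gΦ : (Fin p → ℝ) → Fin p → ℝ)
    (hgΦ : ∀ x w, fderiv ℝ Φ x w = gΦ x ⬝ᵥ w)
    (u : Fin (N + 1) → Fin m → ℝ)
    (lam : ℕ → Fin p → ℝ)
    (hlamT : lam (N + 1) = gΦ (traj f a u (N + 1)))
    (hlam : ∀ k : ℕ, 1 ≤ k → k ≤ N →
      lam k = gl (traj f a u k) + (fx (traj f a u k) (u k))ᵀ *ᵥ lam (k + 1)) :
    ∀ k : ℕ, k ≤ N → ∀ w : Fin m → ℝ,
      fderiv ℝ (fun z => cost f ℓ Φ R a (Function.update u (k : Fin (N + 1)) z)) (u k) w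
        = (R *ᵥ u k + (fu (traj f a u k) (u k))ᵀ *ᵥ lam (k + 1)) ⬝ᵥ w := by
  have hf1 : ∀ v, Differentiable ℝ (fun y => f y v) := fun v =>
    (hf.differentiable one_ne_zero).comp (differentiable_id.prodMk (differentiable_const v))
  have hf2 : ∀ y, Differentiable ℝ (fun z => f y z) := fun y =>
    (hf.differentiable one_ne_zero).comp ((differentiable_const y).prodMk differentiable_id)
  -- the costate identity: gradient of the tail cost along the nominal trajectory
  have costate : ∀ d j, j + d = N + 1 → 1 ≤ j →
      ∀ w' : Fin p → ℝ, fderiv ℝ (tcost f ℓ Φ u j) (traj f a u j) w' = lam j ⬝ᵥ w' := by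
    intro d
    induction d with
    | zero =>
        intro j hj _ w'
        have hjN : j = N + 1 := by omega
        subst hjN
        rw [tcost_top, hgΦ, hlamT]
    | succ d ih =>
        intro j hj hj1 w'
        have hjN : j ≤ N := by omega
        have heq : tcost f ℓ Φ u j = fun y => ℓ y +
            (tcost f ℓ Φ u (j + 1) ∘ fun y => f y (u ((j : ℕ) : Fin (N + 1)))) y :=
          funext fun y => tcost_succ f ℓ Φ u j hjN y
        rw [heq]
        have hd2 : DifferentiableAt ℝ (tcost f ℓ Φ u (j + 1) ∘ fun y => f y (u ((j : ℕ) : Fin (N + 1))))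
            (traj f a u j) :=
          DifferentiableAt.comp _ ((tcost_diff hf hℓ hΦ u (j + 1)) _) ((hf1 _) _)
        rw [fderiv_fun_add ((hℓ.differentiable one_ne_zero) _) hd2, ContinuousLinearMap.add_apply, hgl]
        rw [fderiv_comp _ ((tcost_diff hf hℓ hΦ u (j + 1)) _) ((hf1 _) _),
          ContinuousLinearMap.comp_apply, hfx]
        have hpt : f (traj f a u j) (u ((j : ℕ) : Fin (N + 1))) = traj f a u (j + 1) := rfl
        rw [hpt, ih (j + 1) (by omega) (by omega)]
        rw [hlam j hj1 hjN, add_dotProduct, Matrix.mulVec_transpose, ← Matrix.dotProduct_mulVec]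
  intro k hk w
  have hne : ∀ j : ℕ, j ≤ N → j ≠ k → ((j : ℕ) : Fin (N + 1)) ≠ ((k : ℕ) : Fin (N + 1)) := by
    intro j hj hjk h
    apply hjk
    have := congrArg Fin.val h
    rwa [Fin.val_cast_of_lt (by omega), Fin.val_cast_of_lt (by omega)] at this
  have hstate : ∀ (z : Fin m → ℝ), ∀ j, j ≤ k → traj f a (Function.update u (↑k) z) j = traj f a u j := by
    intro z j
    induction j with
    | zero => intro _; rfl
    | succ j ih =>
        intro hjk
        show f (traj f a (Function.update u ↑k z) j) (Function.update u ↑k z ↑j) =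
          f (traj f a u j) (u ↑j)
        rw [ih (by omega), Function.update_of_ne (hne j (by omega) (by omega))]
  have htail : ∀ (z : Fin m → ℝ), ∀ i, k + 1 + i ≤ N + 1 →
      traj f a (Function.update u (↑k) z) (k + 1 + i) = ttraj f u (k + 1) (f (traj f a u k) z) i := by
    intro z i
    induction i with
    | zero =>
        intro _
        show f (traj f a (Function.update u ↑k z) k) (Function.update u ↑k z ↑k) =
          f (traj f a u k) z
        rw [hstate z k le_rfl, Function.update_self]
    | succ i ih =>
        intro hle
        rw [show k + 1 + (i + 1) = (k + 1 + i) + 1 from by omega]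
        show f (traj f a (Function.update u ↑k z) (k + 1 + i)) (Function.update u ↑k z ↑(k + 1 + i)) =
          f (ttraj f u (k + 1) (f (traj f a u k) z) i) (u ((k + 1 + i : ℕ) : Fin (N + 1)))
        rw [ih (by omega), Function.update_of_ne (hne (k + 1 + i) (by omega) (by omega))]
  -- decomposition of the cost as a function of the k-th control block
  have hcost : ∀ z : Fin m → ℝ, cost f ℓ Φ R a (Function.update u (↑k) z) =
      ((∑ j ∈ Finset.range (k + 1), ℓ (traj f a u j)) +
        ∑ j ∈ (Finset.range (N + 1)).erase k, (1 / 2) * (u ↑j ⬝ᵥ R *ᵥ u ↑j)) +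
      ((1 / 2) * (z ⬝ᵥ R *ᵥ z) + tcost f ℓ Φ u (k + 1) (f (traj f a u k) z)) := by
    intro z
    rw [cost, Finset.sum_add_distrib]
    have hN : N + 1 = (k + 1) + (N - k) := by omega
    have hℓsum : ∑ j ∈ Finset.range (N + 1), ℓ (traj f a (Function.update u ↑k z) j) =
        (∑ j ∈ Finset.range (k + 1), ℓ (traj f a u j)) +
        ∑ i ∈ Finset.range (N - k), ℓ (ttraj f u (k + 1) (f (traj f a u k) z) i) := by
      rw [congrArg Finset.range hN, Finset.sum_range_add]
      congr 1
      · exact Finset.sum_congr rfl fun j hj => by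
          have := Finset.mem_range.mp hj
          rw [hstate z j (by omega)]
      · exact Finset.sum_congr rfl fun i hi => by
          have := Finset.mem_range.mp hi
          rw [htail z i (by omega)]
    have hΦterm : traj f a (Function.update u ↑k z) (N + 1) =
        ttraj f u (k + 1) (f (traj f a u k) z) (N - k) := by
      rw [congrArg (traj f a (Function.update u (↑k) z)) hN, htail z (N - k) (by omega)]
    have hqsum : ∑ j ∈ Finset.range (N + 1),
        (1 / 2) * (Function.update u ↑k z ↑j ⬝ᵥ R *ᵥ Function.update u ↑k z ↑j) =
        (1 / 2) * (z ⬝ᵥ R *ᵥ z) +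
        ∑ j ∈ (Finset.range (N + 1)).erase k, (1 / 2) * (u ↑j ⬝ᵥ R *ᵥ u ↑j) := by
      rw [← Finset.add_sum_erase _ _ (show k ∈ Finset.range (N + 1) from Finset.mem_range.mpr (by omega))]
      congr 1
      · rw [Function.update_self]
      · exact Finset.sum_congr rfl fun j hj => by
          have hj1 := Finset.mem_range.mp (Finset.mem_of_mem_erase hj)
          have hj2 : j ≠ k := Finset.ne_of_mem_erase hj
          rw [Function.update_of_ne (hne j (by omega) hj2)]
    rw [hℓsum, hqsum, hΦterm, tcost, show N + 1 - (k + 1) = N - k from by omega]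
    ring
  -- derivative of the quadratic term
  have hquad : ∀ v : Fin m → ℝ, HasFDerivAt (fun z : Fin m → ℝ => z ⬝ᵥ R *ᵥ z)
      (∑ i : Fin m, ∑ j : Fin m, R i j •
        (v i • (ContinuousLinearMap.proj j : (Fin m → ℝ) →L[ℝ] ℝ) +
          v j • (ContinuousLinearMap.proj i : (Fin m → ℝ) →L[ℝ] ℝ))) v := by
    intro v
    have hrw : (fun z : Fin m → ℝ => z ⬝ᵥ R *ᵥ z) =
        fun z => ∑ i : Fin m, ∑ j : Fin m, R i j * (z i * z j) := by
      funext z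
      simp only [dotProduct, Matrix.mulVec, Finset.mul_sum]
      exact Finset.sum_congr rfl fun i _ => Finset.sum_congr rfl fun j _ => by ring
    rw [hrw]
    apply HasFDerivAt.fun_sum
    intro i _
    apply HasFDerivAt.fun_sum
    intro j _
    exact ((hasFDerivAt_apply i v).mul (hasFDerivAt_apply j v)).const_mul (R i j)
  have hRs : ∀ i j, R j i = R i j := fun i j => by
    have := congrFun (congrFun hR i) j
    simpa [Matrix.transpose_apply] using this
  have hquadval : ∀ c w' : Fin m → ℝ,
      (1 / 2 : ℝ) * (∑ i : Fin m, ∑ j : Fin m, R i j * (c i * w' j + c j * w' i)) =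
        (R *ᵥ c) ⬝ᵥ w' := by
    intro c w'
    have h1 : ∀ i j : Fin m, R i j * (c i * w' j + c j * w' i) =
        R j i * c i * w' j + R i j * c j * w' i := fun i j => by rw [hRs]; ring
    have hS : (R *ᵥ c) ⬝ᵥ w' = ∑ i : Fin m, ∑ j : Fin m, R i j * c j * w' i := by
      simp only [dotProduct, Matrix.mulVec, Finset.sum_mul]
    calc (1 / 2 : ℝ) * (∑ i : Fin m, ∑ j : Fin m, R i j * (c i * w' j + c j * w' i))
        = (1 / 2 : ℝ) * ((∑ i : Fin m, ∑ j : Fin m, R j i * c i * w' j) +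
            ∑ i : Fin m, ∑ j : Fin m, R i j * c j * w' i) := by
          rw [← Finset.sum_add_distrib]
          congr 1
          refine Finset.sum_congr rfl fun i _ => ?_
          rw [← Finset.sum_add_distrib]
          exact Finset.sum_congr rfl fun j _ => h1 i j
      _ = (R *ᵥ c) ⬝ᵥ w' := by
          rw [Finset.sum_comm (f := fun i j => R j i * c i * w' j), ← hS]
          ring
  have hqderiv : ∀ w' : Fin m → ℝ,
      fderiv ℝ (fun z : Fin m → ℝ => (1 / 2) * (z ⬝ᵥ R *ᵥ z)) (u ↑k) w' = (R *ᵥ u ↑k) ⬝ᵥ w' := by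
    intro w'
    rw [((hquad (u ↑k)).const_mul (1 / 2)).fderiv]
    have : ((∑ i : Fin m, ∑ j : Fin m, R i j •
        ((u ↑k) i • (ContinuousLinearMap.proj j : (Fin m → ℝ) →L[ℝ] ℝ) +
          (u ↑k) j • (ContinuousLinearMap.proj i : (Fin m → ℝ) →L[ℝ] ℝ)))) w' =
        ∑ i : Fin m, ∑ j : Fin m, R i j * ((u ↑k) i * w' j + (u ↑k) j * w' i) := by
      simp [ContinuousLinearMap.sum_apply, ContinuousLinearMap.add_apply,
        ContinuousLinearMap.smul_apply, ContinuousLinearMap.proj_apply, smul_eq_mul, mul_add]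
    rw [ContinuousLinearMap.smul_apply, this, smul_eq_mul, hquadval]
  -- derivative of the tail part
  have hgderiv : fderiv ℝ (fun z => tcost f ℓ Φ u (k + 1) (f (traj f a u k) z)) (u ↑k) w =
      ((fu (traj f a u k) (u ↑k))ᵀ *ᵥ lam (k + 1)) ⬝ᵥ w := by
    have hcomp : (fun z => tcost f ℓ Φ u (k + 1) (f (traj f a u k) z)) =
        tcost f ℓ Φ u (k + 1) ∘ fun z => f (traj f a u k) z := rfl
    rw [hcomp, fderiv_comp _ ((tcost_diff hf hℓ hΦ u (k + 1)) _) ((hf2 _) _),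
      ContinuousLinearMap.comp_apply, hfu]
    have hpt : f (traj f a u k) (u ↑k) = traj f a u (k + 1) := rfl
    rw [hpt, costate (N - k) (k + 1) (by omega) (by omega)]
    rw [Matrix.mulVec_transpose, ← Matrix.dotProduct_mulVec]
  have hfun : (fun z => cost f ℓ Φ R a (Function.update u (↑k) z)) =
      fun z => ((∑ j ∈ Finset.range (k + 1), ℓ (traj f a u j)) +
        ∑ j ∈ (Finset.range (N + 1)).erase k, (1 / 2) * (u ↑j ⬝ᵥ R *ᵥ u ↑j)) +
      ((1 / 2) * (z ⬝ᵥ R *ᵥ z) + tcost f ℓ Φ u (k + 1) (f (traj f a u k) z)) := funext hcost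
  have hdq : DifferentiableAt ℝ (fun z : Fin m → ℝ => (1 / 2) * (z ⬝ᵥ R *ᵥ z)) (u ↑k) :=
    ((hquad (u ↑k)).const_mul (1 / 2)).differentiableAt
  have hdg : DifferentiableAt ℝ (fun z => tcost f ℓ Φ u (k + 1) (f (traj f a u k) z)) (u ↑k) :=
    DifferentiableAt.comp _ ((tcost_diff hf hℓ hΦ u (k + 1)) _) ((hf2 _) _)
  rw [hfun, fderiv_const_add, fderiv_fun_add hdq hdg,
    ContinuousLinearMap.add_apply, hqderiv w, hgderiv, add_dotProduct]
end

section
/- Let f : ℝᵖ × ℝᵐ → ℝᵖ be continuously differentiable, ℓ : ℝᵖ → ℝ and Φ : ℝᵖ → ℝ continuously differentiable, R a symmetric m×m real matrix, a ∈ ℝᵖ, and N a natural number. For a control sequence u = (u(0),…,u(N)) ∈ (ℝᵐ)^{N+1}, define the state trajectory by x(0) = a and x(k+1) = f(x(k),u(k)) for 0 ≤ k ≤ N, and the cost J(u) = Σ_{k=0}^{N} ( ℓ(x(k)) + ½ u(k)ᵀ R u(k) ) + Φ(x(N+1)). If u* is a local minimizer of J, then with the costate defined backward by λ(N+1) = ∇Φ(x*(N+1))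 and λ(k) = ∇ℓ(x*(k)) + (∂f/∂x (x*(k),u*(k)))ᵀ λ(k+1), where x* is the trajectory generated by u*, one has 0 = R u*(k) + (∂f/∂u (x*(k),u*(k)))ᵀ λ(k+1) for every 0 ≤ k ≤ N. -/
open Matrix
open Fin.NatCast

lemma fderiv_split {E F G : Type*} [NormedAddCommGroup E] [NormedSpace ℝ E]
    [NormedAddCommGroup F] [NormedSpace ℝ F] [NormedAddCommGroup G] [NormedSpace ℝ G]
    {f : E × F → G} {a : E} {b : F} (hf : DifferentiableAt ℝ f (a, b)) (w : E) (z : F) :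
    fderiv ℝ f (a, b) (w, z) =
      fderiv ℝ (fun x => f (x, b)) a w + fderiv ℝ (fun y => f (a, y)) b z := by
  have h1 : HasFDerivAt (fun x : E => f (x, b))
      ((fderiv ℝ f (a, b)).comp (ContinuousLinearMap.inl ℝ E F)) a :=
    hf.hasFDerivAt.comp a (hasFDerivAt_prodMk_left a b)
  have h2 : HasFDerivAt (fun y : F => f (a, y))
      ((fderiv ℝ f (a, b)).comp (ContinuousLinearMap.inr ℝ E F)) b :=
    hf.hasFDerivAt.comp b (hasFDerivAt_prodMk_right a b)
  rw [h1.fderiv, h2.fderiv]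
  have : (w, z) = ((w, 0) : E × F) + (0, z) := by simp
  rw [this, map_add]
  rfl

lemma quad_expand {m : ℕ} (R : Matrix (Fin m) (Fin m) ℝ) (hR : Rᵀ = R)
    (c d : Fin m → ℝ) (t : ℝ) :
    (1/2 : ℝ) * ((c + t • d) ⬝ᵥ R *ᵥ (c + t • d)) =
      (1/2) * (c ⬝ᵥ R *ᵥ c) + ((R *ᵥ c) ⬝ᵥ d) * t
        + ((1/2) * (d ⬝ᵥ R *ᵥ d)) * (t * t) := by
  have e1 : c ⬝ᵥ R *ᵥ d = (R *ᵥ c) ⬝ᵥ d := by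
    rw [dotProduct_mulVec, ← mulVec_transpose, hR]
  have e2 : d ⬝ᵥ R *ᵥ c = (R *ᵥ c) ⬝ᵥ d := dotProduct_comm _ _
  simp only [mulVec_add, dotProduct_add, add_dotProduct, mulVec_smul,
    dotProduct_smul, smul_dotProduct, smul_eq_mul, e1, e2]
  ring

lemma poly_deriv (c0 c1 c2 : ℝ) :
    HasDerivAt (fun t : ℝ => c0 + c1 * t + c2 * (t * t)) c1 0 := by
  have h1 : HasDerivAt (fun t : ℝ => c0 + c1 * t + c2 * (t * t))
      (0 + c1 * 1 + c2 * (1 * 0 + 0 * 1)) 0 :=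
    ((hasDerivAt_const (0:ℝ) c0).add ((hasDerivAt_id (0:ℝ)).const_mul c1)).add
      (((hasDerivAt_id (0:ℝ)).mul (hasDerivAt_id (0:ℝ))).const_mul c2)
  simpa using h1

/-- Discrete-time Pontryagin stationarity: if `u*` is a local minimizer of `J`, then
with the costate defined backward from the trajectory `x*` generated by `u*`,
`0 = R u*(k) + (∂f/∂u (x*(k),u*(k)))ᵀ λ(k+1)` for every `0 ≤ k ≤ N`. -/
theorem stmt12 {p m N : ℕ}
    (f : (Fin p → ℝ) → (Fin m → ℝ) → Fin p → ℝ)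
    (hf : ContDiff ℝ 1 (fun q : (Fin p → ℝ) × (Fin m → ℝ) => f q.1 q.2))
    (ℓ : (Fin p → ℝ) → ℝ) (hℓ : ContDiff ℝ 1 ℓ)
    (Φ : (Fin p → ℝ) → ℝ) (hΦ : ContDiff ℝ 1 Φ)
    (R : Matrix (Fin m) (Fin m) ℝ) (hR : Rᵀ = R)
    (a : Fin p → ℝ)
    (fx : (Fin p → ℝ) → (Fin m → ℝ) → Matrix (Fin p) (Fin p) ℝ)
    (hfx : ∀ x u w, fderiv ℝ (fun y => f y u) x w = fx x u *ᵥ w)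
    (fu : (Fin p → ℝ) → (Fin m → ℝ) → Matrix (Fin p) (Fin m) ℝ)
    (hfu : ∀ x u w, fderiv ℝ (fun z => f x z) u w = fu x u *ᵥ w)
    (gl : (Fin p → ℝ) → Fin p → ℝ)
    (hgl : ∀ x w, fderiv ℝ ℓ x w = gl x ⬝ᵥ w)
    (gΦ : (Fin p → ℝ) → Fin p → ℝ)
    (hgΦ : ∀ x w, fderiv ℝ Φ x w = gΦ x ⬝ᵥ w)
    (ustar : Fin (N + 1) → Fin m → ℝ)
    (hmin : IsLocalMin (cost f ℓ Φ R a) ustar)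
    (lam : ℕ → Fin p → ℝ)
    (hlamT : lam (N + 1) = gΦ (traj f a ustar (N + 1)))
    (hlam : ∀ k : ℕ, 1 ≤ k → k ≤ N →
      lam k = gl (traj f a ustar k)
        + (fx (traj f a ustar k) (ustar k))ᵀ *ᵥ lam (k + 1)) :
    ∀ k : ℕ, k ≤ N →
      0 = R *ᵥ ustar k + (fu (traj f a ustar k) (ustar k))ᵀ *ᵥ lam (k + 1) := by
  intro j hj
  classical
  have hcoe : ∀ k : ℕ, k ≤ N → ((k : Fin (N+1)) : ℕ) = k := by
    intro k hk
    simp [Fin.val_natCast, Nat.mod_eq_of_lt (by omega : k < N + 1)]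
  have key : ∀ v : Fin m → ℝ,
      0 = (R *ᵥ ustar j + (fu (traj f a ustar j) (ustar j))ᵀ *ᵥ lam (j+1)) ⬝ᵥ v := by
    intro v
    set jf : Fin (N+1) := (j : Fin (N+1)) with hjfdef
    set h : Fin (N+1) → Fin m → ℝ := fun i => if i = jf then v else 0 with hhdef
    set γ : ℝ → (Fin (N+1) → Fin m → ℝ) := fun t i => ustar i + t • h i with hγdef
    have hγ0 : γ 0 = ustar := by funext i; simp [hγdef]
    set δ : ℕ → Fin p → ℝ := fun k => Nat.rec (motive := fun _ => Fin p → ℝ) 0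
      (fun k δk => fx (traj f a ustar k) (ustar k) *ᵥ δk
        + fu (traj f a ustar k) (ustar k) *ᵥ h k) k with hδdef
    have hδ0 : δ 0 = 0 := rfl
    have hδs : ∀ k : ℕ, δ (k+1) = fx (traj f a ustar k) (ustar k) *ᵥ δ k
        + fu (traj f a ustar k) (ustar k) *ᵥ h k := fun k => rfl
    -- derivative of each control component
    have hγc : ∀ i : Fin (N+1), HasDerivAt (fun t => γ t i) (h i) 0 := by
      intro i
      have h1 : HasDerivAt (fun t : ℝ => t • h i) ((1:ℝ) • h i) 0 :=
        (hasDerivAt_id (0:ℝ)).smul_const (h i)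
      simpa [hγdef] using h1.const_add (ustar i)
    -- derivative of the trajectory
    have hX : ∀ k : ℕ, HasDerivAt (fun t => traj f a (γ t) k) (δ k) 0 := by
      intro k
      induction k with
      | zero => simpa [traj, hδ0] using hasDerivAt_const (0:ℝ) a
      | succ k ih =>
        have hpair : HasDerivAt (fun t => (traj f a (γ t) k, γ t (k : Fin (N+1))))
            (δ k, h (k : Fin (N+1))) 0 := ih.prodMk (hγc _)
        have hdf : DifferentiableAt ℝ (fun q : (Fin p → ℝ) × (Fin m → ℝ) => f q.1 q.2)
            (traj f a ustar k, ustar (k : Fin (N+1))) :=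
          (hf.differentiable one_ne_zero).differentiableAt
        have hl : HasFDerivAt (fun q : (Fin p → ℝ) × (Fin m → ℝ) => f q.1 q.2)
            (fderiv ℝ (fun q : (Fin p → ℝ) × (Fin m → ℝ) => f q.1 q.2)
              (traj f a ustar k, ustar (k : Fin (N+1))))
            ((fun t => (traj f a (γ t) k, γ t (k : Fin (N+1)))) 0) := by
          simpa [hγ0] using hdf.hasFDerivAt
        have hcomp := hl.comp_hasDerivAt 0 hpair
        have hval : fderiv ℝ (fun q : (Fin p → ℝ) × (Fin m → ℝ) => f q.1 q.2)
            (traj f a ustar k, ustar (k : Fin (N+1))) (δ k, h (k : Fin (N+1)))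
            = δ (k+1) := by
          rw [fderiv_split hdf]
          rw [hδs]
          congr 1
          · exact hfx _ _ _
          · exact hfu _ _ _
        rw [hval] at hcomp
        exact hcomp
    -- derivative of each cost summand
    have hderℓ : ∀ k : ℕ, HasDerivAt (fun t => ℓ (traj f a (γ t) k))
        (gl (traj f a ustar k) ⬝ᵥ δ k) 0 := by
      intro k
      have hdl : HasFDerivAt ℓ (fderiv ℝ ℓ (traj f a ustar k))
          ((fun t => traj f a (γ t) k) 0) := by
        simpa [hγ0] using ((hℓ.differentiable one_ne_zero) (traj f a ustar k)).hasFDerivAt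
      have := hdl.comp_hasDerivAt 0 (hX k)
      simpa [hgl, Function.comp_def] using this
    have hderΦ : HasDerivAt (fun t => Φ (traj f a (γ t) (N+1)))
        (gΦ (traj f a ustar (N+1)) ⬝ᵥ δ (N+1)) 0 := by
      have hdl : HasFDerivAt Φ (fderiv ℝ Φ (traj f a ustar (N+1)))
          ((fun t => traj f a (γ t) (N+1)) 0) := by
        simpa [hγ0] using ((hΦ.differentiable one_ne_zero) (traj f a ustar (N+1))).hasFDerivAt
      have := hdl.comp_hasDerivAt 0 (hX (N+1))
      simpa [hgΦ, Function.comp_def] using this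
    have hquad : ∀ k : ℕ, HasDerivAt
        (fun t => (1/2 : ℝ) * (γ t (k : Fin (N+1)) ⬝ᵥ R *ᵥ γ t (k : Fin (N+1))))
        ((R *ᵥ ustar (k : Fin (N+1))) ⬝ᵥ h (k : Fin (N+1))) 0 := by
      intro k
      have heq : (fun t : ℝ => (1/2 : ℝ) * (γ t (k : Fin (N+1)) ⬝ᵥ R *ᵥ γ t (k : Fin (N+1))))
          = fun t => (1/2) * (ustar (k : Fin (N+1)) ⬝ᵥ R *ᵥ ustar (k : Fin (N+1)))
            + ((R *ᵥ ustar (k : Fin (N+1))) ⬝ᵥ h (k : Fin (N+1))) * t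
            + ((1/2) * (h (k : Fin (N+1)) ⬝ᵥ R *ᵥ h (k : Fin (N+1)))) * (t * t) := by
        funext t
        exact quad_expand R hR _ _ t
      rw [heq]
      exact poly_deriv _ _ _
    -- derivative of the total cost along γ
    have hsum : HasDerivAt (fun t => cost f ℓ Φ R a (γ t))
        ((∑ k ∈ Finset.range (N+1),
          (gl (traj f a ustar k) ⬝ᵥ δ k + (R *ᵥ ustar (k : Fin (N+1))) ⬝ᵥ h (k : Fin (N+1))))
          + gΦ (traj f a ustar (N+1)) ⬝ᵥ δ (N+1)) 0 := by
      have := (HasDerivAt.fun_sum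
        (fun k (_ : k ∈ Finset.range (N+1)) => (hderℓ k).add (hquad k))).add hderΦ
      simpa [cost, Pi.add_def] using this
    -- local minimality along γ
    have hγcont : ContinuousAt γ 0 := by
      apply Continuous.continuousAt
      exact continuous_pi (fun i => continuous_const.add (continuous_id.smul continuous_const))
    have hlocal : IsLocalMin (fun t => cost f ℓ Φ R a (γ t)) 0 := by
      have h0 : IsMinFilter (cost f ℓ Φ R a) (nhds ustar) (γ 0) := by
        rw [hγ0]; exact hmin
      have ht : Filter.Tendsto γ (nhds 0) (nhds ustar) := by
        rw [← hγ0]; exact hγcont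
      exact h0.comp_tendsto ht
    have hzero := hlocal.hasDerivAt_eq_zero hsum
    -- basic facts about h and δ
    have hjfval : ((jf : Fin (N+1)) : ℕ) = j := by rw [hjfdef]; exact hcoe j hj
    have hhzero : ∀ k : ℕ, k ≤ N → k ≠ j → h (k : Fin (N+1)) = 0 := by
      intro k hk hkj
      rw [hhdef]
      simp only [ite_eq_right_iff]
      intro heq
      exfalso
      apply hkj
      have := congrArg Fin.val heq
      rw [hcoe k hk, hjfval] at this
      exact this
    have hhj : h (j : Fin (N+1)) = v := by
      rw [hhdef]
      simp [hjfdef]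
    have hδzero : ∀ k : ℕ, k ≤ j → δ k = 0 := by
      intro k hk
      induction k with
      | zero => exact hδ0
      | succ k ih =>
        rw [hδs, ih (by omega), hhzero k (by omega) (by omega), mulVec_zero, mulVec_zero,
          add_zero]
    have hδj1 : δ (j+1) = fu (traj f a ustar j) (ustar (j : Fin (N+1))) *ᵥ v := by
      rw [hδs, hδzero j le_rfl, mulVec_zero, zero_add, hhj]
    have hδstep : ∀ k : ℕ, j < k → k ≤ N →
        δ (k+1) = fx (traj f a ustar k) (ustar (k : Fin (N+1))) *ᵥ δ k := by
      intro k hk1 hk2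
      rw [hδs, hhzero k hk2 (by omega), mulVec_zero, add_zero]
    -- telescoping with the costate
    have htel : ∀ k : ℕ, j + 1 ≤ k → k ≤ N + 1 →
        lam (j+1) ⬝ᵥ δ (j+1) =
          (∑ i ∈ Finset.Ico (j+1) k, gl (traj f a ustar i) ⬝ᵥ δ i) + lam k ⬝ᵥ δ k := by
      intro k hk
      induction k, hk using Nat.le_induction with
      | base => intro _; simp
      | succ k hk ih =>
        intro hkN
        have hkN' : k ≤ N := by omega
        have hstep : lam k ⬝ᵥ δ k
            = gl (traj f a ustar k) ⬝ᵥ δ k + lam (k+1) ⬝ᵥ δ (k+1) := by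
          rw [hlam k (by omega) hkN', add_dotProduct]
          congr 1
          rw [hδstep k (by omega) hkN', mulVec_transpose, ← dotProduct_mulVec]
        rw [Finset.sum_Ico_succ_top hk, ih (by omega), hstep]
        ring
    -- evaluate the sums
    have hsum2 : ∑ k ∈ Finset.range (N+1),
        (R *ᵥ ustar (k : Fin (N+1))) ⬝ᵥ h (k : Fin (N+1)) = (R *ᵥ ustar jf) ⬝ᵥ v := by
      rw [Finset.sum_eq_single j]
      · rw [hhj, hjfdef]
      · intro k hk hkj
        rw [hhzero k (Nat.lt_succ_iff.mp (Finset.mem_range.mp hk)) hkj, dotProduct_zero]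
      · intro hj'
        exact absurd (Finset.mem_range.mpr (by omega)) hj'
    have hsplit : ∑ k ∈ Finset.range (N+1), gl (traj f a ustar k) ⬝ᵥ δ k
        = ∑ k ∈ Finset.Ico (j+1) (N+1), gl (traj f a ustar k) ⬝ᵥ δ k := by
      rw [Finset.range_eq_Ico,
        ← Finset.sum_Ico_consecutive _ (Nat.zero_le (j+1)) (by omega : j+1 ≤ N+1)]
      have hz : ∑ k ∈ Finset.Ico 0 (j+1), gl (traj f a ustar k) ⬝ᵥ δ k = 0 :=
        Finset.sum_eq_zero (fun k hk => by
          rw [hδzero k (Nat.lt_succ_iff.mp (Finset.mem_Ico.mp hk).2), dotProduct_zero])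
      rw [hz, zero_add]
    have hN1 := htel (N+1) (by omega) le_rfl
    rw [hlamT] at hN1
    have hlamdot : lam (j+1) ⬝ᵥ δ (j+1)
        = ((fu (traj f a ustar j) (ustar jf))ᵀ *ᵥ lam (j+1)) ⬝ᵥ v := by
      rw [hδj1, dotProduct_mulVec, ← mulVec_transpose]
    rw [Finset.sum_add_distrib, hsum2, hsplit] at hzero
    rw [add_dotProduct, ← hlamdot, hN1]
    linarith [hzero]
  funext i
  have hkey := key (Pi.single i 1)
  rw [dotProduct_single, mul_one] at hkey
  simpa using hkey
end
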